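/- A positive Radon measure dμ supported on the z-axis A in ℝ³ generates a Newtonian potential ν(x) = −∫ |x−ξ|^{−1} dμ(ξ) that is finite at some (equivalently, every) point off the axis if and only if ∫₁^∞ m_x(ρ)/ρ² dρ < ∞, where m_x(ρ) = μ(B_x(ρ)) for a fixed x on the axis. -/

import Mathlib

open MeasureTheory Set
open scoped ENNReal

lemma aux_lint_inv_sq (a : ℝ) (ha : 0 < a) :
    ∫⁻ ρ in Set.Ioi a, ENNReal.ofReal (ρ ^ 2)⁻¹ = ENNReal.ofReal a⁻¹ := by
  have hint : IntegrableOn (fun ρ : ℝ => (ρ ^ 2)⁻¹) (Set.Ioi a) := by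
    refine (integrableOn_Ioi_rpow_of_lt (by norm_num : (-2:ℝ) < -1) ha).congr_fun
      (fun ρ hρ => ?_) measurableSet_Ioi
    have hρ0 : 0 < ρ := ha.trans hρ
    beta_reduce
    rw [Real.rpow_neg hρ0.le, show ((2:ℝ) = ((2:ℕ):ℝ)) by norm_num, Real.rpow_natCast]
  rw [← ofReal_integral_eq_lintegral_ofReal hint
      (Filter.Eventually.of_forall fun ρ => by positivity)]
  congr 1
  have : ∫ ρ in Set.Ioi a, (ρ ^ 2)⁻¹ = ∫ ρ in Set.Ioi a, ρ ^ (-2:ℝ) := by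
    refine setIntegral_congr_fun measurableSet_Ioi fun ρ hρ => ?_
    have hρ0 : 0 < ρ := ha.trans hρ
    beta_reduce
    rw [Real.rpow_neg hρ0.le, show ((2:ℝ) = ((2:ℕ):ℝ)) by norm_num, Real.rpow_natCast]
  rw [this, integral_Ioi_rpow_of_lt (by norm_num : (-2:ℝ) < -1) ha]
  rw [show (-2:ℝ) + 1 = -1 by norm_num, Real.rpow_neg_one]
  field_simp

theorem newtonian_potential_finite_iff
    (μ : Measure (EuclideanSpace ℝ (Fin 3))) [IsFiniteMeasureOnCompacts μ]
    (A : Set (EuclideanSpace ℝ (Fin 3)))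
    (hA : A = {p | p 0 = 0 ∧ p 1 = 0})
    (hsupp : μ Aᶜ = 0)
    (x : EuclideanSpace ℝ (Fin 3)) (hx : x ∈ A)
    (m : ℝ → ℝ) (hm : ∀ ρ, m ρ = (μ (Metric.ball x ρ)).toReal) :
    (∃ y ∉ A, ∫⁻ ξ, ENNReal.ofReal ‖y - ξ‖⁻¹ ∂μ < ⊤) ↔
      IntegrableOn (fun ρ => m ρ / ρ ^ 2) (Ici (1 : ℝ)) := by
  have haeA : ∀ᵐ ξ ∂μ, ξ ∈ A := by
    rw [ae_iff]
    exact hsupp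
  set g : EuclideanSpace ℝ (Fin 3) → ℝ := fun ξ => (max 1 ‖ξ - x‖)⁻¹ with hg
  have hgpos : ∀ ξ, 0 < max 1 ‖ξ - x‖ := fun ξ => lt_max_of_lt_left one_pos
  set J : ℝ≥0∞ := ∫⁻ ξ, ENNReal.ofReal (g ξ) ∂μ with hJ
  -- Step A : existence of finite potential ↔ J < ⊤
  have stepA : (∃ y ∉ A, ∫⁻ ξ, ENNReal.ofReal ‖y - ξ‖⁻¹ ∂μ < ⊤) ↔ J < ⊤ := by
    constructor
    · rintro ⟨y, hyA, hy⟩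
      set C : ℝ := ‖y - x‖ + 1 with hC
      have hC0 : 0 < C := by positivity
      have hbound : ∀ᵐ ξ ∂μ, ENNReal.ofReal (g ξ) ≤
          ENNReal.ofReal C * ENNReal.ofReal ‖y - ξ‖⁻¹ := by
        filter_upwards [haeA] with ξ hξ
        have hne : y ≠ ξ := fun h => hyA (h ▸ hξ)
        have hpos : 0 < ‖y - ξ‖ := by
          simpa [sub_eq_zero] using norm_pos_iff.mpr (sub_ne_zero.mpr hne)
        have hle : ‖y - ξ‖ ≤ C * max 1 ‖ξ - x‖ := by
          have h1 : ‖y - ξ‖ ≤ ‖y - x‖ + ‖x - ξ‖ := norm_sub_le_norm_sub_add_norm_sub _ _ _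
          have h2 : ‖x - ξ‖ = ‖ξ - x‖ := norm_sub_rev _ _
          have h3 : ‖ξ - x‖ ≤ max 1 ‖ξ - x‖ := le_max_right _ _
          have h4 : (1:ℝ) ≤ max 1 ‖ξ - x‖ := le_max_left _ _
          calc ‖y - ξ‖ ≤ ‖y - x‖ + ‖ξ - x‖ := by rw [← h2]; exact h1
            _ ≤ ‖y - x‖ * max 1 ‖ξ - x‖ + 1 * max 1 ‖ξ - x‖ := by
                have hn := norm_nonneg (y - x)
                nlinarith
            _ = C * max 1 ‖ξ - x‖ := by ring
        have key : g ξ ≤ C * ‖y - ξ‖⁻¹ := by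
          have h0 := hgpos ξ
          calc g ξ = C * (C * max 1 ‖ξ - x‖)⁻¹ := by rw [hg]; field_simp
            _ ≤ C * ‖y - ξ‖⁻¹ := by gcongr
        calc ENNReal.ofReal (g ξ) ≤ ENNReal.ofReal (C * ‖y - ξ‖⁻¹) := ENNReal.ofReal_le_ofReal key
          _ = ENNReal.ofReal C * ENNReal.ofReal ‖y - ξ‖⁻¹ := ENNReal.ofReal_mul hC0.le
      calc J ≤ ∫⁻ ξ, ENNReal.ofReal C * ENNReal.ofReal ‖y - ξ‖⁻¹ ∂μ := lintegral_mono_ae hbound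
        _ = ENNReal.ofReal C * ∫⁻ ξ, ENNReal.ofReal ‖y - ξ‖⁻¹ ∂μ :=
            lintegral_const_mul' _ _ ENNReal.ofReal_ne_top
        _ < ⊤ := ENNReal.mul_lt_top ENNReal.ofReal_lt_top hy
    · intro hJfin
      refine ⟨x + EuclideanSpace.single (0 : Fin 3) (1:ℝ), ?_, ?_⟩
      · rw [hA]
        intro h
        have hx0 : x 0 = 0 := (hA ▸ hx).1
        have h1 : (x + EuclideanSpace.single (0 : Fin 3) (1:ℝ)) 0 = 0 := h.1
        simp [hx0, EuclideanSpace.single_apply] at h1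
      · set y := x + EuclideanSpace.single (0 : Fin 3) (1:ℝ) with hy
        have hyx : ‖y - x‖ = 1 := by
          rw [hy, add_sub_cancel_left, EuclideanSpace.norm_single, norm_one]
        have hbound : ∀ᵐ ξ ∂μ, ENNReal.ofReal ‖y - ξ‖⁻¹ ≤
            ENNReal.ofReal 2 * ENNReal.ofReal (g ξ) := by
          filter_upwards [haeA] with ξ hξ
          have hξ0 : ξ 0 = 0 := (hA ▸ hξ).1
          have hx0 : x 0 = 0 := (hA ▸ hx).1
          have hcoord : (y - ξ) 0 = 1 := by
            simp [hy, hx0, hξ0, EuclideanSpace.single_apply]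
          have h1 : (1:ℝ) ≤ ‖y - ξ‖ := by
            have habs : |(y - ξ) 0| ≤ ‖y - ξ‖ := by
              rw [EuclideanSpace.norm_eq]
              have hsum : ‖(y - ξ) 0‖ ^ 2 ≤ ∑ i, ‖(y - ξ) i‖ ^ 2 :=
                Finset.single_le_sum (f := fun i => ‖(y - ξ) i‖ ^ 2)
                  (fun i _ => by positivity) (Finset.mem_univ 0)
              calc |(y - ξ) 0| = Real.sqrt (‖(y - ξ) 0‖ ^ 2) := by
                    rw [Real.sqrt_sq_eq_abs, Real.norm_eq_abs, abs_abs]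
                _ ≤ Real.sqrt (∑ i, ‖(y - ξ) i‖ ^ 2) := Real.sqrt_le_sqrt hsum
            rw [hcoord] at habs
            simpa using habs
          have hpos : 0 < ‖y - ξ‖ := lt_of_lt_of_le one_pos h1
          have h2 : ‖ξ - x‖ ≤ 1 + ‖y - ξ‖ := by
            calc ‖ξ - x‖ ≤ ‖ξ - y‖ + ‖y - x‖ := norm_sub_le_norm_sub_add_norm_sub _ _ _
              _ = ‖y - ξ‖ + 1 := by rw [norm_sub_rev, hyx]
              _ = 1 + ‖y - ξ‖ := by ring
          have hmax : max 1 ‖ξ - x‖ ≤ 2 * ‖y - ξ‖ := by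
            refine max_le (by linarith) (by linarith)
          have key : ‖y - ξ‖⁻¹ ≤ 2 * g ξ := by
            have h0 := hgpos ξ
            calc ‖y - ξ‖⁻¹ = 2 * (2 * ‖y - ξ‖)⁻¹ := by field_simp
              _ ≤ 2 * (max 1 ‖ξ - x‖)⁻¹ := by gcongr
          calc ENNReal.ofReal ‖y - ξ‖⁻¹ ≤ ENNReal.ofReal (2 * g ξ) :=
                ENNReal.ofReal_le_ofReal key
            _ = ENNReal.ofReal 2 * ENNReal.ofReal (g ξ) := ENNReal.ofReal_mul (by norm_num)
        calc ∫⁻ ξ, ENNReal.ofReal ‖y - ξ‖⁻¹ ∂μ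
            ≤ ∫⁻ ξ, ENNReal.ofReal 2 * ENNReal.ofReal (g ξ) ∂μ := lintegral_mono_ae hbound
          _ = ENNReal.ofReal 2 * J := lintegral_const_mul' _ _ ENNReal.ofReal_ne_top
          _ < ⊤ := ENNReal.mul_lt_top ENNReal.ofReal_lt_top hJfin
  -- Step B : Fubini identity
  have stepB : ∫⁻ ρ in Ioi (1:ℝ), μ (Metric.ball x ρ) * ENNReal.ofReal (ρ ^ 2)⁻¹ = J := by
    set F : ℝ → EuclideanSpace ℝ (Fin 3) → ℝ≥0∞ := fun ρ ξ =>
      (Metric.ball x ρ).indicator (fun _ => ENNReal.ofReal (ρ ^ 2)⁻¹) ξ with hF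
    have hmeasF : AEMeasurable (Function.uncurry F)
        ((volume.restrict (Ioi (1:ℝ))).prod μ) := by
      have heq : Function.uncurry F = {p : ℝ × EuclideanSpace ℝ (Fin 3) |
          dist p.2 x < p.1}.indicator (fun p => ENNReal.ofReal (p.1 ^ 2)⁻¹) := by
        funext p
        rcases p with ⟨ρ, ξ⟩
        simp only [Function.uncurry, hF, Set.indicator, Metric.mem_ball, Set.mem_setOf_eq]
      rw [heq]
      refine Measurable.aemeasurable (Measurable.indicator ?_ ?_)
      · exact (ENNReal.measurable_ofReal.comp
          ((measurable_fst.pow_const 2).inv))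
      · exact (isOpen_lt (Continuous.dist continuous_snd continuous_const)
          continuous_fst).measurableSet
    calc ∫⁻ ρ in Ioi (1:ℝ), μ (Metric.ball x ρ) * ENNReal.ofReal (ρ ^ 2)⁻¹
        = ∫⁻ ρ in Ioi (1:ℝ), ∫⁻ ξ, F ρ ξ ∂μ := by
          refine setLIntegral_congr_fun measurableSet_Ioi
            (fun ρ _ => ?_)
          beta_reduce
          rw [hF, lintegral_indicator_const Metric.isOpen_ball.measurableSet, mul_comm]
      _ = ∫⁻ ξ, ∫⁻ ρ in Ioi (1:ℝ), F ρ ξ ∂volume ∂μ := lintegral_lintegral_swap hmeasF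
      _ = J := by
          refine lintegral_congr fun ξ => ?_
          have hrw : ∀ ρ : ℝ, F ρ ξ =
              (Ioi (dist ξ x)).indicator (fun ρ => ENNReal.ofReal (ρ ^ 2)⁻¹) ρ := by
            intro ρ
            simp only [hF, Set.indicator, Metric.mem_ball, Set.mem_Ioi]
          calc ∫⁻ ρ in Ioi (1:ℝ), F ρ ξ
              = ∫⁻ ρ in Ioi (1:ℝ),
                  (Ioi (dist ξ x)).indicator (fun ρ => ENNReal.ofReal (ρ ^ 2)⁻¹) ρ := by
                exact lintegral_congr fun ρ => by rw [hrw]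
            _ = ∫⁻ ρ in Ioi (dist ξ x) ∩ Ioi (1:ℝ), ENNReal.ofReal (ρ ^ 2)⁻¹ := by
                rw [lintegral_indicator measurableSet_Ioi, Measure.restrict_restrict
                  measurableSet_Ioi]
            _ = ∫⁻ ρ in Ioi (max 1 (dist ξ x)), ENNReal.ofReal (ρ ^ 2)⁻¹ := by
                rw [Set.Ioi_inter_Ioi, max_comm]
            _ = ENNReal.ofReal (g ξ) := by
                rw [aux_lint_inv_sq _ (lt_max_of_lt_left one_pos)]
                simp only [hg, dist_eq_norm]
  -- Step C : real integrability ↔ lintegral finiteness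
  have hmfun : m = fun ρ => (μ (Metric.ball x ρ)).toReal := funext hm
  have hmono : Monotone fun ρ => μ (Metric.ball x ρ) :=
    fun a b hab => measure_mono (Metric.ball_subset_ball hab)
  have hmeas_m : Measurable m := by
    rw [hmfun]; exact ENNReal.measurable_toReal.comp hmono.measurable
  have hmeasf : Measurable (fun ρ => m ρ / ρ ^ 2) :=
    hmeas_m.div ((measurable_id.pow_const 2))
  have hnonneg : ∀ ρ : ℝ, 0 ≤ m ρ / ρ ^ 2 := fun ρ => by
    rw [hmfun]; positivity
  have stepC : IntegrableOn (fun ρ => m ρ / ρ ^ 2) (Ici (1 : ℝ)) ↔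
      ∫⁻ ρ in Ioi (1:ℝ), μ (Metric.ball x ρ) * ENNReal.ofReal (ρ ^ 2)⁻¹ < ⊤ := by
    have hlint : ∫⁻ ρ in Ici (1:ℝ), ENNReal.ofReal (m ρ / ρ ^ 2)
        = ∫⁻ ρ in Ioi (1:ℝ), μ (Metric.ball x ρ) * ENNReal.ofReal (ρ ^ 2)⁻¹ := by
      rw [← setLIntegral_congr Ioi_ae_eq_Ici]
      refine setLIntegral_congr_fun measurableSet_Ioi
        (fun ρ hρ => ?_)
      beta_reduce
      have hρ0 : (0:ℝ) < ρ := lt_trans one_pos hρ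
      have hfin : μ (Metric.ball x ρ) ≠ ⊤ := measure_ball_lt_top.ne
      rw [div_eq_mul_inv, ENNReal.ofReal_mul (by rw [hmfun]; positivity),
        hm ρ, ENNReal.ofReal_toReal hfin]
    rw [IntegrableOn]
    constructor
    · intro h
      rw [← hlint]
      have := h.2
      rwa [hasFiniteIntegral_iff_ofReal
        (Filter.Eventually.of_forall fun ρ => hnonneg ρ)] at this
    · intro h
      refine ⟨hmeasf.aestronglyMeasurable, ?_⟩
      rw [hasFiniteIntegral_iff_ofReal (Filter.Eventually.of_forall fun ρ => hnonneg ρ)]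
      rwa [hlint]
  rw [stepA, stepC, stepB]
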